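/- arXiv:2401.10235 — 2 statements merged into one kernel-verified Lean document; each statement's English description precedes it below -/
import Mathlib

section
/- Let W = (W0, W1) where W0 is an n×l0 real matrix and W1 is an n×l1 real matrix with the block-diagonal (orthogonal cut basis) structure: the n rows are partitioned into blocks b = 1,...,B, and W1 is block-diagonal across this row partition, i.e. the rows of W1 in block b are zero except in the columns of the b-th column block W_{1b}, and additionally W0^T W1 = 0. Assume W^T W is invertible and each W_{1b}^T W_{1b} is invertible. Let μ ∈ ℝ^n and define η* = (W^T W)^{-1} W^T μ, and write η* = (η0*, η1*) with η1* = (η_{11}*, ..., η_{1B}*) partitioned according to the column blocks of W1. Then for every block b, η_{1b}* = (W_{1b}^T W_{1b})^{-1} W_{1b}^T μ_b, where μ_b is the subvector of μ corresponding to the rows in block b. -/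
open Matrix

/-- **Lemma 1 (orthogonal cut basis, independent errors).**
Let `W = (W0, W1)` where `W1` is block-diagonal across a partition of the rows into blocks
`b = 1,…,B` (an orthogonal cut basis) and `W0ᵀ W1 = 0`. Then the block-`b` component of the
least-squares solution `η* = (WᵀW)⁻¹ Wᵀ μ` is obtained by regressing `μ_b` on `W_{1b}` alone:
`η*_{1b} = (W_{1b}ᵀ W_{1b})⁻¹ W_{1b}ᵀ μ_b`. -/
theorem cut_basis_least_squares_blockwise
    {B l0 : ℕ} (nrows lcols : Fin B → ℕ)
    (W0 : Matrix ((b : Fin B) × Fin (nrows b)) (Fin l0) ℝ)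
    (W1b : (b : Fin B) → Matrix (Fin (nrows b)) (Fin (lcols b)) ℝ)
    (W1 : Matrix ((b : Fin B) × Fin (nrows b)) ((b : Fin B) × Fin (lcols b)) ℝ)
    (hblock : ∀ (b b' : Fin B) (i : Fin (nrows b)) (j : Fin (lcols b')),
      W1 ⟨b, i⟩ ⟨b', j⟩ =
        if h : b = b' then W1b b i (Fin.cast (congrArg lcols h.symm) j) else 0)
    (horth : W0ᵀ * W1 = 0)
    (W : Matrix ((b : Fin B) × Fin (nrows b)) (Fin l0 ⊕ (b : Fin B) × Fin (lcols b)) ℝ)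
    (hW : W = Matrix.fromCols W0 W1)
    (hWinv : IsUnit (Wᵀ * W).det)
    (hWbinv : ∀ b, IsUnit ((W1b b)ᵀ * W1b b).det)
    (μ : ((b : Fin B) × Fin (nrows b)) → ℝ)
    (ηstar : (Fin l0 ⊕ (b : Fin B) × Fin (lcols b)) → ℝ)
    (hη : ηstar = (Wᵀ * W)⁻¹ *ᵥ (Wᵀ *ᵥ μ)) :
    ∀ b : Fin B,
      (fun j : Fin (lcols b) => ηstar (Sum.inr ⟨b, j⟩)) =
        ((W1b b)ᵀ * W1b b)⁻¹ *ᵥ ((W1b b)ᵀ *ᵥ fun i : Fin (nrows b) => μ ⟨b, i⟩) := by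
  intro b
  have glob : (Wᵀ * W) *ᵥ ηstar = Wᵀ *ᵥ μ := by
    rw [hη, Matrix.mulVec_mulVec, Matrix.mul_nonsing_inv _ hWinv, Matrix.one_mulVec]
  -- helper: sums against column ⟨b,j⟩ of W1 localize to block b
  have hcol : ∀ (j : Fin (lcols b)) (f : ((c : Fin B) × Fin (nrows c)) → ℝ),
      ∑ r : (c : Fin B) × Fin (nrows c), W1 r ⟨b, j⟩ * f r
        = ∑ i : Fin (nrows b), W1b b i j * f ⟨b, i⟩ := by
    intro j f
    rw [← Finset.univ_sigma_univ, Finset.sum_sigma]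
    rw [Fintype.sum_eq_single b]
    · refine Finset.sum_congr rfl fun i _ => ?_
      rw [hblock]
      simp [Fin.cast]
    · intro c hc
      refine Finset.sum_eq_zero fun i _ => ?_
      rw [hblock, dif_neg hc, zero_mul]
  have key : ((W1b b)ᵀ * W1b b) *ᵥ (fun j => ηstar (Sum.inr ⟨b, j⟩))
      = (W1b b)ᵀ *ᵥ (fun i => μ ⟨b, i⟩) := by
    funext j
    have h1 := congrFun glob (Sum.inr ⟨b, j⟩)
    -- rewrite RHS of h1
    have hR : (Wᵀ *ᵥ μ) (Sum.inr ⟨b, j⟩)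
        = ((W1b b)ᵀ *ᵥ (fun i => μ ⟨b, i⟩)) j := by
      simp only [Matrix.mulVec, dotProduct, Matrix.transpose_apply, hW,
        Matrix.fromCols_apply_inr]
      exact hcol j μ
    have hL : ((Wᵀ * W) *ᵥ ηstar) (Sum.inr ⟨b, j⟩)
        = (((W1b b)ᵀ * W1b b) *ᵥ (fun j => ηstar (Sum.inr ⟨b, j⟩))) j := by
      simp only [Matrix.mulVec, dotProduct, Fintype.sum_sum_type, Matrix.mul_apply,
        Matrix.transpose_apply, hW, Matrix.fromCols_apply_inl,
        Matrix.fromCols_apply_inr]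
      have h0 : ∀ k : Fin l0,
          (∑ r : (c : Fin B) × Fin (nrows c), W1 r ⟨b, j⟩ * W0 r k) = 0 := by
        intro k
        have := congrFun (congrFun horth k) ⟨b, j⟩
        simp only [Matrix.mul_apply, Matrix.transpose_apply, Matrix.zero_apply] at this
        rw [← this]
        exact Finset.sum_congr rfl fun r _ => mul_comm _ _
      have h2 : ∀ x : (c : Fin B) × Fin (lcols c),
          (∑ r : (c : Fin B) × Fin (nrows c), W1 r ⟨b, j⟩ * W1 r x)
            = ∑ i : Fin (nrows b), W1b b i j * W1 ⟨b, i⟩ x := fun x => hcol j _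
      simp only [h0, zero_mul, Finset.sum_const_zero, zero_add, h2]
      rw [← Finset.univ_sigma_univ, Finset.sum_sigma]
      rw [Fintype.sum_eq_single b]
      · refine Finset.sum_congr rfl fun j' _ => ?_
        congr 1
        refine Finset.sum_congr rfl fun i _ => ?_
        rw [hblock]
        simp [Fin.cast]
      · intro c hc
        refine Finset.sum_eq_zero fun j' _ => ?_
        have : ∀ i : Fin (nrows b), W1b b i j * W1 ⟨b, i⟩ ⟨c, j'⟩ = 0 := by
          intro i
          rw [hblock, dif_neg (fun h => hc h.symm), mul_zero]
        simp [this]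
    rw [hL, hR] at h1
    exact h1
  calc (fun j => ηstar (Sum.inr ⟨b, j⟩))
      = (((W1b b)ᵀ * W1b b)⁻¹ * ((W1b b)ᵀ * W1b b)) *ᵥ
          (fun j => ηstar (Sum.inr ⟨b, j⟩)) := by
        rw [Matrix.nonsing_inv_mul _ (hWbinv b), Matrix.one_mulVec]
    _ = _ := by rw [← Matrix.mulVec_mulVec, key]
end

section
/- Let W = (W0, W1) be n×(l0+l1) with W1 block-diagonal across a row partition into blocks b = 1,...,B (orthogonal cut basis) and W0^T W1 = 0. Let Σ be an n×n positive definite matrix that is block-diagonal across the same row partition with blocks Σ_b. Suppose the rows within each block b are further partitioned by individuals m = 1,...,M, each individual having the same number of rows; suppose (i) the sub-block of Σ_b for individual m, Σ_{bm}, is the same matrix for all m; (ii) the rows of W0 in block b for individual m, W_{0bm}, are the same matrix for all m; (iii) W_{1bm} = (C_b x_{m1}, ..., C_b x_{mp}), i.e. the sub-block of W_{1b} for individual m consists of a fixed basis matrix C_b (the same for all m) multiplied by each entry of the individual's covariate vector x_m = (x_{m1},...,x_{mp}) ∈ ℝ^p; and (iv) Σ_{m=1}^M x_m = 0. Assume all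 relevant Gram matrices are invertible. Let μ ∈ ℝ^n and define η̃* = (W^T Σ^{-1} W)^{-1} W^T Σ^{-1} μ, partitioned as η̃* = (η̃0*, η̃_{11}*, ..., η̃_{1B}*). Then for every block b, η̃_{1b}* = (W_{1b}^T Σ_b^{-1} W_{1b})^{-1} W_{1b}^T Σ_b^{-1} μ_b, where μ_b is the subvector of μ for the rows in block b. -/
open Matrix


section Aux

variable {n m : Type*} [Fintype n] [Fintype m] [DecidableEq n] [DecidableEq m]

lemma aux_posDef_submatrix {A : Matrix n n ℝ} (hA : A.PosDef) (f : m → n)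
    (hf : Function.Injective f) : (A.submatrix f f).PosDef := by
  exact hA.submatrix hf

end Aux

lemma aux_inv_blockDiagonal' {o : Type*} [Fintype o] [DecidableEq o] {m' : o → Type*}
    [∀ i, Fintype (m' i)] [∀ i, DecidableEq (m' i)]
    (f : ∀ i, Matrix (m' i) (m' i) ℝ) (hf : ∀ i, IsUnit (f i).det) :
    (blockDiagonal' f)⁻¹ = blockDiagonal' fun i => (f i)⁻¹ := by
  apply inv_eq_right_inv
  rw [← blockDiagonal'_mul]
  have h : (fun k => f k * (f k)⁻¹) = fun _ => 1 :=
    funext fun k => mul_nonsing_inv _ (hf k)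
  rw [h]
  exact blockDiagonal'_one

lemma aux_blockDiagonal'_mulVec {o : Type*} [Fintype o] [DecidableEq o]
    {m' n' : o → Type*} [∀ i, Fintype (n' i)]
    (f : ∀ i, Matrix (m' i) (n' i) ℝ) (v : ((i : o) × n' i) → ℝ) (b : o) (i : m' b) :
    (blockDiagonal' f *ᵥ v) ⟨b, i⟩ = (f b *ᵥ fun j => v ⟨b, j⟩) i := by
  classical
  simp only [mulVec, dotProduct]
  rw [← Finset.univ_sigma_univ, Finset.sum_sigma]
  rw [Fintype.sum_eq_single b]
  · exact Finset.sum_congr rfl fun j _ => by rw [blockDiagonal'_apply_eq]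
  · intro b' hb'
    exact Finset.sum_eq_zero fun j _ => by
      rw [blockDiagonal'_apply_ne _ _ _ (Ne.symm hb'), zero_mul]

lemma aux_blockInv {M Tb : ℕ} (S : Matrix (Fin Tb) (Fin Tb) ℝ) (hS : IsUnit S.det)
    (MS : Matrix (Fin M × Fin Tb) (Fin M × Fin Tb) ℝ)
    (hMS : ∀ u v, MS u v = if u.1 = v.1 then S u.2 v.2 else 0) :
    ∀ u v, MS⁻¹ u v = if u.1 = v.1 then S⁻¹ u.2 v.2 else 0 := by
  have h : MS⁻¹ = Matrix.of fun u v => if u.1 = v.1 then S⁻¹ u.2 v.2 else 0 := by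
    apply inv_eq_right_inv
    ext u v
    simp only [mul_apply, hMS, Matrix.of_apply]
    rw [Fintype.sum_prod_type]
    simp only [ite_mul, mul_ite, zero_mul, mul_zero]
    have hsw : ∀ m'' : Fin M, (∑ t'' : Fin Tb,
        if m'' = v.1 then (if u.1 = m'' then S u.2 t'' * S⁻¹ t'' v.2 else 0) else 0)
        = if u.1 = m'' then (if m'' = v.1 then (∑ t'' : Fin Tb, S u.2 t'' * S⁻¹ t'' v.2) else 0) else 0 := by
      intro m''; split_ifs <;> simp
    simp only [hsw]
    rw [Finset.sum_ite_eq Finset.univ u.1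
      (fun m'' => if m'' = v.1 then (∑ t'' : Fin Tb, S u.2 t'' * S⁻¹ t'' v.2) else 0)]
    have hSS : (∑ t'' : Fin Tb, S u.2 t'' * S⁻¹ t'' v.2) = (1 : Matrix (Fin Tb) (Fin Tb) ℝ) u.2 v.2 := by
      rw [← mul_apply, mul_nonsing_inv S hS]
    simp only [Finset.mem_univ, if_true, hSS]
    by_cases h1 : u.1 = v.1 <;> by_cases h2 : u.2 = v.2 <;>
      simp [Matrix.one_apply, Prod.ext_iff, h1, h2]
  intro u v; rw [h]; rfl


/-- **Lemma S2 (orthogonal cut basis, dependent/functional data).**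
Rows are partitioned into blocks (regions) `b = 1,…,B`; within block `b`, rows are further
indexed by individuals `m = 1,…,M` and grid points `t = 1,…,T b` (each individual has the same
number of rows). `W1` is an orthogonal cut basis (block-diagonal across regions, `W0ᵀW1 = 0`),
the covariance `Sig` is block-diagonal across regions with per-individual blocks `Sb b` that
are identical across individuals, the baseline basis `W0` is identical across individuals,
the covariate block is `W_{1bm} = (C_b x_{m1}, …, C_b x_{mp})`, and the covariates are centered
(`Σ_m x_m = 0`). Then the block-`b` component of the weighted least-squares solution
`η̃* = (WᵀSig⁻¹W)⁻¹ WᵀSig⁻¹ μ` is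
`η̃*_{1b} = (W_{1b}ᵀ Sig_b⁻¹ W_{1b})⁻¹ W_{1b}ᵀ Sig_b⁻¹ μ_b`. -/
theorem cut_basis_weighted_least_squares_blockwise
    {B l0 M p : ℕ} (T K : Fin B → ℕ)
    (W0 : Matrix ((b : Fin B) × (Fin M × Fin (T b))) (Fin l0) ℝ)
    (W0base : (b : Fin B) → Matrix (Fin (T b)) (Fin l0) ℝ)
    (hW0 : ∀ (b : Fin B) (m : Fin M) (t : Fin (T b)) (c : Fin l0),
      W0 ⟨b, (m, t)⟩ c = W0base b t c)
    (C : (b : Fin B) → Matrix (Fin (T b)) (Fin (K b)) ℝ)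
    (x : Fin M → Fin p → ℝ)
    (hx : ∀ j : Fin p, ∑ m : Fin M, x m j = 0)
    (W1 : Matrix ((b : Fin B) × (Fin M × Fin (T b))) ((b : Fin B) × (Fin p × Fin (K b))) ℝ)
    (hW1 : ∀ (b b' : Fin B) (m : Fin M) (t : Fin (T b)) (j : Fin p) (k : Fin (K b')),
      W1 ⟨b, (m, t)⟩ ⟨b', (j, k)⟩ =
        if h : b = b' then C b t (Fin.cast (congrArg K h.symm) k) * x m j else 0)
    (horth : W0ᵀ * W1 = 0)
    (Sb : (b : Fin B) → Matrix (Fin (T b)) (Fin (T b)) ℝ)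
    (Sig : Matrix ((b : Fin B) × (Fin M × Fin (T b))) ((b : Fin B) × (Fin M × Fin (T b))) ℝ)
    (hSigOff : ∀ (b b' : Fin B) (u : Fin M × Fin (T b)) (v : Fin M × Fin (T b')),
      b ≠ b' → Sig ⟨b, u⟩ ⟨b', v⟩ = 0)
    (hSigBlk : ∀ (b : Fin B) (m m' : Fin M) (t t' : Fin (T b)),
      Sig ⟨b, (m, t)⟩ ⟨b, (m', t')⟩ = if m = m' then Sb b t t' else 0)
    (hSigPD : Sig.PosDef)
    (W : Matrix ((b : Fin B) × (Fin M × Fin (T b)))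
      (Fin l0 ⊕ (b : Fin B) × (Fin p × Fin (K b))) ℝ)
    (hW : W = Matrix.fromCols W0 W1)
    (W1blk : (b : Fin B) → Matrix (Fin M × Fin (T b)) (Fin p × Fin (K b)) ℝ)
    (hW1blk : ∀ (b : Fin B) (mt : Fin M × Fin (T b)) (jk : Fin p × Fin (K b)),
      W1blk b mt jk = C b mt.2 jk.2 * x mt.1 jk.1)
    (Sigblk : (b : Fin B) → Matrix (Fin M × Fin (T b)) (Fin M × Fin (T b)) ℝ)
    (hSigblk : ∀ (b : Fin B) (mt mt' : Fin M × Fin (T b)),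
      Sigblk b mt mt' = if mt.1 = mt'.1 then Sb b mt.2 mt'.2 else 0)
    (hGram : IsUnit (Wᵀ * Sig⁻¹ * W).det)
    (hGramBlk : ∀ b, IsUnit ((W1blk b)ᵀ * (Sigblk b)⁻¹ * W1blk b).det)
    (μ : ((b : Fin B) × (Fin M × Fin (T b))) → ℝ)
    (ηtilde : (Fin l0 ⊕ (b : Fin B) × (Fin p × Fin (K b))) → ℝ)
    (hη : ηtilde = (Wᵀ * Sig⁻¹ * W)⁻¹ *ᵥ (Wᵀ *ᵥ (Sig⁻¹ *ᵥ μ))) :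
    ∀ b : Fin B,
      (fun jk : Fin p × Fin (K b) => ηtilde (Sum.inr ⟨b, jk⟩)) =
        ((W1blk b)ᵀ * (Sigblk b)⁻¹ * W1blk b)⁻¹ *ᵥ
          ((W1blk b)ᵀ *ᵥ ((Sigblk b)⁻¹ *ᵥ fun mt : Fin M × Fin (T b) => μ ⟨b, mt⟩)) := by
  
  classical
  intro b
  -- injectivity of block inclusions
  have hinj : ∀ b0 : Fin B, Function.Injective
      (fun mt : Fin M × Fin (T b0) => (⟨b0, mt⟩ : (b : Fin B) × (Fin M × Fin (T b)))) := by
    intro b0 u v h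
    exact eq_of_heq (Sigma.mk.inj_iff.mp h).2
  -- Sigblk is a principal submatrix of Sig, hence PosDef
  have hSigblk_sub : ∀ b0 : Fin B, Sigblk b0 =
      Sig.submatrix (fun mt => ⟨b0, mt⟩) (fun mt => ⟨b0, mt⟩) := by
    intro b0; ext ⟨m, t⟩ ⟨m', t'⟩
    rw [hSigblk, submatrix_apply, hSigBlk]
  have hSigblkPD : ∀ b0, (Sigblk b0).PosDef := by
    intro b0; rw [hSigblk_sub b0]
    exact aux_posDef_submatrix hSigPD _ (hinj b0)
  have hSigblkdet : ∀ b0, IsUnit (Sigblk b0).det := fun b0 =>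
    isUnit_iff_ne_zero.mpr (hSigblkPD b0).det_pos.ne'
  -- Sig as a blockDiagonal'
  have hSig : Sig = blockDiagonal' Sigblk := by
    ext ⟨b1, m, t⟩ ⟨b2, m', t'⟩
    rw [blockDiagonal'_apply']
    by_cases h : b1 = b2
    · subst h
      rw [dif_pos rfl, hSigblk, hSigBlk]
      rfl
    · rw [dif_neg h]
      exact hSigOff b1 b2 (m, t) (m', t') h
  have hSiginv : Sig⁻¹ = blockDiagonal' fun b0 => (Sigblk b0)⁻¹ := by
    rw [hSig]; exact aux_inv_blockDiagonal' _ hSigblkdet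
  -- W1 as a blockDiagonal'
  have hW1bd : W1 = blockDiagonal' W1blk := by
    ext ⟨b1, m, t⟩ ⟨b2, j, k⟩
    rw [hW1, blockDiagonal'_apply']
    by_cases h : b1 = b2
    · subst h
      rw [dif_pos rfl, dif_pos rfl, hW1blk]
      rfl
    · rw [dif_neg h, dif_neg h]
  -- Gram blocks
  have hA1 : W1ᵀ * Sig⁻¹ * W1 =
      blockDiagonal' fun b0 => (W1blk b0)ᵀ * (Sigblk b0)⁻¹ * W1blk b0 := by
    rw [hW1bd, hSiginv, blockDiagonal'_transpose, ← blockDiagonal'_mul, ← blockDiagonal'_mul]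
  -- cross term vanishes
  have hcross : W1ᵀ * Sig⁻¹ * W0 = 0 := by
    rcases Nat.eq_zero_or_pos M with hM | hM
    · haveI : IsEmpty (Fin M) := by subst hM; infer_instance
      haveI : IsEmpty ((b : Fin B) × (Fin M × Fin (T b))) := ⟨fun u => IsEmpty.false u.2.1⟩
      ext u c
      rw [Matrix.mul_apply]
      simp
    · obtain ⟨m₀⟩ := Fin.pos_iff_nonempty.mp hM
      have hSbPD : ∀ b0 : Fin B, (Sb b0).PosDef := by
        intro b0
        have hsub : Sb b0 =
            Sig.submatrix (fun t => ⟨b0, (m₀, t)⟩) (fun t => ⟨b0, (m₀, t)⟩) := by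
          ext t t'
          rw [submatrix_apply, hSigBlk]
          simp
        rw [hsub]
        refine aux_posDef_submatrix hSigPD _ ?_
        intro t t' h
        have h2 := eq_of_heq (Sigma.mk.inj_iff.mp h).2
        exact (Prod.ext_iff.mp h2).2
      have hSbinv : ∀ (b0 : Fin B) (u v : Fin M × Fin (T b0)),
          (Sigblk b0)⁻¹ u v = if u.1 = v.1 then (Sb b0)⁻¹ u.2 v.2 else 0 := by
        intro b0
        exact aux_blockInv (Sb b0) (isUnit_iff_ne_zero.mpr (hSbPD b0).det_pos.ne')
          (Sigblk b0) (hSigblk b0)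
      rw [hW1bd, hSiginv, blockDiagonal'_transpose, ← blockDiagonal'_mul]
      ext ⟨b1, j, k⟩ c
      rw [Matrix.mul_apply, Matrix.zero_apply, ← Finset.univ_sigma_univ, Finset.sum_sigma]
      rw [Fintype.sum_eq_single b1]
      swap
      · intro b' hb'
        refine Finset.sum_eq_zero fun mt _ => ?_
        rw [blockDiagonal'_apply_ne _ _ _ (Ne.symm hb'), zero_mul]
      simp only [blockDiagonal'_apply_eq, Matrix.mul_apply, Matrix.transpose_apply,
        hW1blk, hSbinv, hW0]
      have step1 : ∀ mt : Fin M × Fin (T b1),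
          (∑ uv : Fin M × Fin (T b1),
            C b1 uv.2 k * x uv.1 j * if uv.1 = mt.1 then (Sb b1)⁻¹ uv.2 mt.2 else 0)
          = x mt.1 j * ∑ t' : Fin (T b1), C b1 t' k * (Sb b1)⁻¹ t' mt.2 := by
        intro mt
        rw [Fintype.sum_prod_type]
        have hcollapse : ∀ m' : Fin M,
            (∑ t' : Fin (T b1), C b1 t' k * x m' j *
              if m' = mt.1 then (Sb b1)⁻¹ t' mt.2 else 0)
            = if m' = mt.1 then
                (x m' j * ∑ t' : Fin (T b1), C b1 t' k * (Sb b1)⁻¹ t' mt.2) else 0 := by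
          intro m'; split_ifs with h
          · rw [Finset.mul_sum]; exact Finset.sum_congr rfl fun t' _ => by ring
          · simp
        simp only [hcollapse]
        rw [Finset.sum_ite_eq' Finset.univ mt.1
          (fun m' => x m' j * ∑ t' : Fin (T b1), C b1 t' k * (Sb b1)⁻¹ t' mt.2)]
        simp
      simp only [step1]
      rw [Fintype.sum_prod_type]
      have step2 : ∀ m : Fin M,
          (∑ t : Fin (T b1),
            (x m j * ∑ t' : Fin (T b1), C b1 t' k * (Sb b1)⁻¹ t' t) * W0base b1 t c)
          = x m j * ∑ t : Fin (T b1),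
              (∑ t' : Fin (T b1), C b1 t' k * (Sb b1)⁻¹ t' t) * W0base b1 t c := by
        intro m
        rw [Finset.mul_sum]; exact Finset.sum_congr rfl fun t _ => by ring
      simp only [step2]
      rw [← Finset.sum_mul, hx j, zero_mul]
  -- assembled Gram matrix
  have hAblocks : Wᵀ * Sig⁻¹ * W =
      fromBlocks (W0ᵀ * Sig⁻¹ * W0) (W0ᵀ * Sig⁻¹ * W1) 0
        (blockDiagonal' fun b0 => (W1blk b0)ᵀ * (Sigblk b0)⁻¹ * W1blk b0) := by
    rw [hW, transpose_fromCols, Matrix.mul_assoc, mul_fromCols,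
      fromRows_mul_fromCols, ← Matrix.mul_assoc, ← Matrix.mul_assoc, ← Matrix.mul_assoc,
      ← Matrix.mul_assoc, hcross, hA1]
  -- the normal equations
  have hAeta : (Wᵀ * Sig⁻¹ * W) *ᵥ ηtilde = Wᵀ *ᵥ (Sig⁻¹ *ᵥ μ) := by
    rw [hη, mulVec_mulVec, mul_nonsing_inv _ hGram, one_mulVec]
  -- extract the block-b equation
  have hmain : ∀ jk : Fin p × Fin (K b),
      (((W1blk b)ᵀ * (Sigblk b)⁻¹ * W1blk b) *ᵥ fun jk' => ηtilde (Sum.inr ⟨b, jk'⟩)) jk =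
      ((W1blk b)ᵀ *ᵥ ((Sigblk b)⁻¹ *ᵥ fun mt : Fin M × Fin (T b) => μ ⟨b, mt⟩)) jk := by
    intro jk
    have h1 := congrFun hAeta (Sum.inr ⟨b, jk⟩)
    rw [hAblocks, fromBlocks_mulVec] at h1
    simp only [Sum.elim_inr, Pi.add_apply, zero_mulVec, Pi.zero_apply, zero_add] at h1
    rw [aux_blockDiagonal'_mulVec] at h1
    rw [hW, transpose_fromCols, fromRows_mulVec, Sum.elim_inr] at h1
    rw [hW1bd, blockDiagonal'_transpose, aux_blockDiagonal'_mulVec] at h1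
    have h2 : (fun mt : Fin M × Fin (T b) => (Sig⁻¹ *ᵥ μ) ⟨b, mt⟩) =
        (Sigblk b)⁻¹ *ᵥ fun mt : Fin M × Fin (T b) => μ ⟨b, mt⟩ := by
      funext mt; rw [hSiginv, aux_blockDiagonal'_mulVec]
    rw [h2] at h1
    exact h1
  -- conclude
  have hfinal : ((W1blk b)ᵀ * (Sigblk b)⁻¹ * W1blk b) *ᵥ (fun jk' => ηtilde (Sum.inr ⟨b, jk'⟩)) =
      (W1blk b)ᵀ *ᵥ ((Sigblk b)⁻¹ *ᵥ fun mt : Fin M × Fin (T b) => μ ⟨b, mt⟩) :=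
    funext hmain
  have h3 := congrArg (fun v => ((W1blk b)ᵀ * (Sigblk b)⁻¹ * W1blk b)⁻¹ *ᵥ v) hfinal
  simp only [mulVec_mulVec] at h3
  rw [nonsing_inv_mul _ (hGramBlk b), one_mulVec] at h3
  simp only [mulVec_mulVec, Matrix.mul_assoc] at h3 ⊢
  exact h3
end
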